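/- Let f be a conjunctive Boolean network with strongly connected dependency graph D, loop number p*, and irreducible components with vertex sets U_0,…,U_{p*−1}. A state x ∈ F₂ⁿ lies in a periodic orbit of f (i.e., f^m(x) = x for some m ≥ 1) if and only if, for each k = 0,…,p*−1, all entries of x restricted to U_k are equal. -/

import Mathlib

/-- A walk of length `ℓ` from `a` to `b` in the digraph with edge relation `E`. -/
def IsWalk {V : Type*} (E : V → V → Prop) (w : ℕ → V) (ℓ : ℕ) (a b : V) : Prop :=
  w 0 = a ∧ w ℓ = b ∧ ∀ i < ℓ, E (w i) (w (i + 1))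

/-- A digraph is strongly connected if any vertex can reach any other by a walk. -/
def StronglyConnected {V : Type*} (E : V → V → Prop) : Prop :=
  ∀ a b : V, ∃ w ℓ, IsWalk E w ℓ a b

/-- A cycle of length `ℓ`: a closed walk with no repeated vertices other than start/end. -/
def IsCycle {V : Type*} (E : V → V → Prop) (w : ℕ → V) (ℓ : ℕ) : Prop :=
  0 < ℓ ∧ w ℓ = w 0 ∧ (∀ i < ℓ, E (w i) (w (i + 1))) ∧
    ∀ i j, i < ℓ → j < ℓ → w i = w j → i = j

/-- `RelP E p a b` (written `a ∼ₚ b`): some walk from `a` to `b` has length divisible by `p`. -/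
def RelP {V : Type*} (E : V → V → Prop) (p : ℕ) (a b : V) : Prop :=
  ∃ w ℓ, IsWalk E w ℓ a b ∧ p ∣ ℓ

/-- The conjunctive Boolean network with in-neighbor sets `N`: coordinate `i` updates
to the AND (product over `F₂`) of the variables indexed by `N i`. -/
noncomputable def cbn {n : ℕ} (N : Fin n → Finset (Fin n)) (x : Fin n → Bool) : Fin n → Bool :=
  fun i => (N i).inf x

/-- The dependency graph of the conjunctive Boolean network: edge `j → i` iff `j ∈ N i`. -/
def depEdge {n : ℕ} (N : Fin n → Finset (Fin n)) (j i : Fin n) : Prop := j ∈ N i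

section walks
variable {V : Type*} {E : V → V → Prop}

lemma isWalk_const (a : V) : IsWalk E (fun _ => a) 0 a a :=
  ⟨rfl, rfl, fun i hi => absurd hi (Nat.not_lt_zero i)⟩

lemma IsWalk.concat {w1 w2 : ℕ → V} {ℓ1 ℓ2 : ℕ} {a b c : V}
    (h1 : IsWalk E w1 ℓ1 a b) (h2 : IsWalk E w2 ℓ2 b c) :
    IsWalk E (fun t => if t < ℓ1 then w1 t else w2 (t - ℓ1)) (ℓ1 + ℓ2) a c := by
  obtain ⟨h10, h1e, h1s⟩ := h1
  obtain ⟨h20, h2e, h2s⟩ := h2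
  refine ⟨?_, ?_, ?_⟩
  · by_cases h : 0 < ℓ1
    · simpa [h] using h10
    · simp only [h, if_false]
      have : ℓ1 = 0 := by omega
      subst this
      simpa using h20.trans (h10 ▸ h1e.symm)
  · have : ¬ (ℓ1 + ℓ2 < ℓ1) := by omega
    simp only [this, if_false]
    simpa using h2e
  · intro i hi
    by_cases h : i < ℓ1
    · simp only [h, if_true]
      by_cases h' : i + 1 < ℓ1
      · simpa [h'] using h1s i h
      · have hi1 : i + 1 = ℓ1 := by omega
        have : (i + 1 - ℓ1) = 0 := by omega
        simp only [h', if_false, this, h20]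
        have := h1s i h
        rwa [hi1, h1e] at this
    · have h' : ¬ (i + 1 < ℓ1) := by omega
      simp only [h, h', if_false]
      have he : i + 1 - ℓ1 = (i - ℓ1) + 1 := by omega
      rw [he]
      exact h2s (i - ℓ1) (by omega)

/-- p divides the length of any closed walk, given p divides all cycle lengths. -/
lemma closed_walk_dvd {p : ℕ} (hdiv : ∀ w ℓ, IsCycle E w ℓ → p ∣ ℓ) :
    ∀ ℓ (w : ℕ → V) (a : V), IsWalk E w ℓ a a → p ∣ ℓ := by
  intro ℓ
  induction ℓ using Nat.strong_induction_on with
  | _ ℓ IH =>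
    intro w a hw
    obtain ⟨hw0, hwe, hws⟩ := hw
    rcases Nat.eq_zero_or_pos ℓ with h0 | hpos
    · simp [h0]
    by_cases hinj : ∀ i j, i < ℓ → j < ℓ → w i = w j → i = j
    · exact hdiv w ℓ ⟨hpos, hwe.trans hw0.symm, hws, hinj⟩
    · push_neg at hinj
      obtain ⟨i, j, hi, hj, hij, hne⟩ := hinj
      -- wlog i < j
      rcases Nat.lt_or_ge i j with hlt | hge
      case _ =>
        -- inner closed walk from w i of length j - i
        have hinner : IsWalk E (fun t => w (i + t)) (j - i) (w i) (w i) := by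
          refine ⟨by simp, ?_, ?_⟩
          · show w (i + (j - i)) = w i
            have : i + (j - i) = j := by omega
            rw [this, ← hij]
          · intro t ht
            show E (w (i + t)) (w (i + (t+1)))
            have : i + (t+1) = (i + t) + 1 := by omega
            rw [this]
            exact hws (i + t) (by omega)
        have houter : IsWalk E (fun t => if t < i then w t else w (t + (j - i)))
            (ℓ - (j - i)) a a := by
          refine ⟨?_, ?_, ?_⟩
          · by_cases h : 0 < i
            · simpa [h]
            · have : i = 0 := by omega
              subst this
              simpa using hij.symm.trans hw0
          · have h1 : ¬ (ℓ - (j - i) < i) := by omega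
            have h2 : ℓ - (j - i) + (j - i) = ℓ := by omega
            simp only [h1, if_false, h2, hwe]
          · intro t ht
            by_cases h : t < i
            · by_cases h' : t + 1 < i
              · simpa [h, h'] using hws t (by omega)
              · have ht1 : t + 1 = i := by omega
                simp only [h, if_true, h', if_false]
                have : t + 1 + (j - i) = j := by omega
                rw [this, ← hij, ← ht1]
                exact hws t (by omega)
            · have h' : ¬ (t + 1 < i) := by omega
              simp only [h, h', if_false]
              have : t + 1 + (j - i) = (t + (j - i)) + 1 := by omega
              rw [this]
              exact hws (t + (j - i)) (by omega)
        have d1 := IH (j - i) (by omega) _ _ hinner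
        have d2 := IH (ℓ - (j - i)) (by omega) _ _ houter
        have : ℓ = (j - i) + (ℓ - (j - i)) := by omega
        rw [this]
        exact Nat.dvd_add d1 d2
      case _ =>
        have hlt : j < i := by omega
        have hinner : IsWalk E (fun t => w (j + t)) (i - j) (w j) (w j) := by
          refine ⟨by simp, ?_, ?_⟩
          · show w (j + (i - j)) = w j
            have : j + (i - j) = i := by omega
            rw [this, hij]
          · intro t ht
            show E (w (j + t)) (w (j + (t+1)))
            have : j + (t+1) = (j + t) + 1 := by omega
            rw [this]
            exact hws (j + t) (by omega)
        have houter : IsWalk E (fun t => if t < j then w t else w (t + (i - j)))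
            (ℓ - (i - j)) a a := by
          refine ⟨?_, ?_, ?_⟩
          · by_cases h : 0 < j
            · simpa [h]
            · have : j = 0 := by omega
              subst this
              simpa using hij.trans hw0
          · have h1 : ¬ (ℓ - (i - j) < j) := by omega
            have h2 : ℓ - (i - j) + (i - j) = ℓ := by omega
            simp only [h1, if_false, h2, hwe]
          · intro t ht
            by_cases h : t < j
            · by_cases h' : t + 1 < j
              · simpa [h, h'] using hws t (by omega)
              · have ht1 : t + 1 = j := by omega
                simp only [h, if_true, h', if_false]
                have : t + 1 + (i - j) = i := by omega
                rw [this, hij, ← ht1]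
                exact hws t (by omega)
            · have h' : ¬ (t + 1 < j) := by omega
              simp only [h, h', if_false]
              have : t + 1 + (i - j) = (t + (i - j)) + 1 := by omega
              rw [this]
              exact hws (t + (i - j)) (by omega)
        have d1 := IH (i - j) (by omega) _ _ hinner
        have d2 := IH (ℓ - (i - j)) (by omega) _ _ houter
        have : ℓ = (i - j) + (ℓ - (i - j)) := by omega
        rw [this]
        exact Nat.dvd_add d1 d2


section walks2
variable {V : Type*} {E : V → V → Prop}

/-- prepend an edge to a walk -/
lemma IsWalk.prepend {w : ℕ → V} {m : ℕ} {j i k : V}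
    (hw : IsWalk E w m j i) (hk : E k j) :
    IsWalk E (fun t => if t = 0 then k else w (t - 1)) (m + 1) k i := by
  obtain ⟨h0, he, hs⟩ := hw
  refine ⟨rfl, by simp [he], ?_⟩
  intro t ht
  rcases Nat.eq_zero_or_pos t with h | h
  · subst h
    simpa [h0] using hk
  · have h1 : ¬ (t = 0) := by omega
    have h2 : ¬ (t + 1 = 0) := by omega
    simp only [h1, h2, if_false]
    have : t + 1 - 1 = (t - 1) + 1 := by omega
    rw [this]
    exact hs (t - 1) (by omega)


lemma cbn_iterate_true_iff {n : ℕ} (N : Fin n → Finset (Fin n)) (m : ℕ)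
    (x : Fin n → Bool) (i : Fin n) :
    ((cbn N)^[m] x i = true) ↔
      ∀ j w, IsWalk (depEdge N) w m j i → x j = true := by
  induction m generalizing x with
  | zero =>
    simp only [Function.iterate_zero, id_eq]
    constructor
    · rintro h j w ⟨h0, he, -⟩
      rw [← h0.symm.trans he] at h
      exact h
    · intro h
      exact h i (fun _ => i) ⟨rfl, rfl, fun t ht => absurd ht (Nat.not_lt_zero t)⟩
  | succ m IH =>
    rw [Function.iterate_succ_apply, IH]
    constructor
    · intro H k w hw
      obtain ⟨h0, he, hs⟩ := hw
      have hw' : IsWalk (depEdge N) (fun t => w (t + 1)) m (w 1) i := by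
        refine ⟨rfl, by simpa using he, ?_⟩
        intro t ht
        exact hs (t + 1) (by omega)
      have := H (w 1) _ hw'
      have hmem : k ∈ N (w 1) := by
        have := hs 0 (by omega)
        rwa [h0] at this
      have := (Finset.inf_eq_top_iff x (N (w 1))).mp this k hmem
      exact this
    · intro H j w hw
      show (N j).inf x = ⊤
      rw [Finset.inf_eq_top_iff]
      intro k hk
      exact H k _ (hw.prepend hk)

lemma exists_backward_walk {n : ℕ} (N : Fin n → Finset (Fin n)) (hne : ∀ i, (N i).Nonempty)
    (i : Fin n) : ∀ m, ∃ j w, IsWalk (depEdge N) w m j i := by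
  intro m
  induction m with
  | zero => exact ⟨i, fun _ => i, rfl, rfl, fun t ht => absurd ht (Nat.not_lt_zero t)⟩
  | succ m IH =>
    obtain ⟨j, w, hw⟩ := IH
    obtain ⟨k, hk⟩ := hne j
    exact ⟨k, _, hw.prepend hk⟩

lemma S_mul {S : Set ℕ} (h0 : 0 ∈ S) (hadd : ∀ a ∈ S, ∀ b ∈ S, a + b ∈ S) :
    ∀ t, ∀ c ∈ S, t * c ∈ S := by
  intro t
  induction t with
  | zero => simpa using fun c _ => h0
  | succ t IH =>
    intro c hc
    have : (t + 1) * c = t * c + c := by ring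
    rw [this]
    exact hadd _ (IH c hc) _ hc

lemma large_multiples {S : Set ℕ} (h0 : 0 ∈ S) (hadd : ∀ a ∈ S, ∀ b ∈ S, a + b ∈ S)
    {u v p : ℕ} (hu : u ∈ S) (hv : v ∈ S) (huv : u = v + p) (hpv : p ∣ v) :
    ∃ K, ∀ t, K ≤ t → t * p ∈ S := by
  obtain ⟨k, hk⟩ := hpv
  rcases Nat.eq_zero_or_pos k with hk0 | hkpos
  · refine ⟨0, fun t _ => ?_⟩
    have hv0 : v = 0 := by rw [hk, hk0, mul_zero]
    have : u = p := by omega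
    rw [← this]
    exact S_mul h0 hadd t u hu
  · refine ⟨k * k, fun t ht => ?_⟩
    set a := t / k with ha
    set r := t % k with hr
    have htar : t = a * k + r := by
      rw [ha, hr, mul_comm]
      exact (Nat.div_add_mod t k).symm
    have hrk : r < k := Nat.mod_lt t hkpos
    have hak : k ≤ a := by
      rw [ha, Nat.le_div_iff_mul_le hkpos]
      exact ht
    have har : r ≤ a := by omega
    have heq : t * p = (a - r) * v + r * u := by
      have h1 : (a - r) * v + r * v = a * v := by
        rw [← add_mul]
        congr 1
        omega
      have h2 : r * u = r * v + r * p := by rw [huv]; ring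
      have h3 : a * v = a * k * p := by rw [hk]; ring
      calc t * p = (a * k + r) * p := by rw [← htar]
        _ = a * k * p + r * p := by ring
        _ = a * v + r * p := by rw [h3]
        _ = ((a - r) * v + r * v) + r * p := by rw [h1]
        _ = (a - r) * v + (r * v + r * p) := by ring
        _ = (a - r) * v + r * u := by rw [← h2]
    rw [heq]
    exact hadd _ (S_mul h0 hadd _ _ hv) _ (S_mul h0 hadd _ _ hu)


/-- All sufficiently large multiples of p are lengths of closed walks at b. -/
lemma exists_closed_multiples (hsc : StronglyConnected E)
    {p : ℕ} (hp : 0 < p)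
    (hdiv : ∀ w ℓ, IsCycle E w ℓ → p ∣ ℓ)
    (hgcd : ∀ q, (∀ w ℓ, IsCycle E w ℓ → q ∣ ℓ) → q ∣ p)
    (b : V) :
    ∃ K, ∀ t, K ≤ t → ∃ w, IsWalk E w (t * p) b b := by
  set S : Set ℕ := {s | ∃ w, IsWalk E w s b b} with hS
  have h0 : 0 ∈ S := ⟨fun _ => b, isWalk_const b⟩
  have hadd : ∀ a ∈ S, ∀ c ∈ S, a + c ∈ S := by
    rintro a ⟨w1, hw1⟩ c ⟨w2, hw2⟩
    exact ⟨_, hw1.concat hw2⟩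
  have hpS : ∀ s ∈ S, p ∣ s := by
    rintro s ⟨w, hw⟩
    exact closed_walk_dvd hdiv s w b hw
  set T : AddSubgroup ℤ := AddSubgroup.closure ((fun s : ℕ => (s : ℤ)) '' S) with hT
  have hcycT : ∀ w ℓ, IsCycle E w ℓ → (ℓ : ℤ) ∈ T := by
    intro w ℓ hc
    obtain ⟨w1, ℓ1, hw1⟩ := hsc b (w 0)
    obtain ⟨w2, ℓ2, hw2⟩ := hsc (w 0) b
    have hcw : IsWalk E w ℓ (w 0) (w 0) := ⟨rfl, hc.2.1, hc.2.2.1⟩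
    have hs1 : ℓ1 + ℓ2 ∈ S := ⟨_, hw1.concat hw2⟩
    have hs2 : ℓ1 + (ℓ + ℓ2) ∈ S := ⟨_, hw1.concat (hcw.concat hw2)⟩
    have : (ℓ : ℤ) = ((ℓ1 + (ℓ + ℓ2) : ℕ) : ℤ) - ((ℓ1 + ℓ2 : ℕ) : ℤ) := by push_cast; ring
    rw [this]
    exact sub_mem (AddSubgroup.subset_closure ⟨_, hs2, rfl⟩)
      (AddSubgroup.subset_closure ⟨_, hs1, rfl⟩)
  obtain ⟨g, hg⟩ := Int.subgroup_cyclic T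
  have hgq : g.natAbs ∣ p := by
    apply hgcd
    intro w ℓ hc
    have := hcycT w ℓ hc
    rw [hg, AddSubgroup.mem_closure_singleton] at this
    obtain ⟨c, hc'⟩ := this
    have : g ∣ (ℓ : ℤ) := ⟨c, by rw [← hc']; simp [smul_eq_mul, mul_comm]⟩
    have := Int.natAbs_dvd_natAbs.mpr this
    simpa using this
  have hpT : (p : ℤ) ∈ T := by
    rw [hg, AddSubgroup.mem_closure_singleton]
    have : g ∣ (p : ℤ) := Int.natAbs_dvd.mp (Int.natCast_dvd_natCast.mpr hgq)
    obtain ⟨c, hc⟩ := this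
    exact ⟨c, by rw [hc]; simp [smul_eq_mul, mul_comm]⟩
  have key : ∀ z ∈ T, ∃ u ∈ S, ∃ v ∈ S, z = (u : ℤ) - v := by
    intro z hz
    rw [hT] at hz
    induction hz using AddSubgroup.closure_induction with
    | mem y hy =>
      obtain ⟨s, hs, rfl⟩ := hy
      exact ⟨s, hs, 0, h0, by simp⟩
    | zero => exact ⟨0, h0, 0, h0, by simp⟩
    | add y z' hy hz' IHy IHz =>
      obtain ⟨u1, hu1, v1, hv1, rfl⟩ := IHy
      obtain ⟨u2, hu2, v2, hv2, rfl⟩ := IHz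
      exact ⟨u1 + u2, hadd _ hu1 _ hu2, v1 + v2, hadd _ hv1 _ hv2, by push_cast; ring⟩
    | neg y hy IHy =>
      obtain ⟨u1, hu1, v1, hv1, rfl⟩ := IHy
      exact ⟨v1, hv1, u1, hu1, by push_cast; ring⟩
  obtain ⟨u, hu, v, hv, huv⟩ := key _ hpT
  have huv' : u = v + p := by omega
  obtain ⟨K, hK⟩ := large_multiples h0 hadd hu hv huv' (hpS v hv)
  exact ⟨K, fun t ht => hK t ht⟩


/-- A state lies in a periodic orbit of a conjunctive Boolean network iff it is
constant on each equivalence class `U_k` of the relation `∼_{p*}` (where `p*` is the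
loop number of the strongly connected dependency graph). -/
theorem periodic_iff_constant_on_components {n : ℕ} (N : Fin n → Finset (Fin n))
    (hne : ∀ i, (N i).Nonempty) (hsc : StronglyConnected (depEdge N))
    (p : ℕ) (hp : 0 < p)
    (hdiv : ∀ w ℓ, IsCycle (depEdge N) w ℓ → p ∣ ℓ)
    (hgcd : ∀ q, (∀ w ℓ, IsCycle (depEdge N) w ℓ → q ∣ ℓ) → q ∣ p)
    (x : Fin n → Bool) :
    (∃ m, 0 < m ∧ (cbn N)^[m] x = x) ↔
      ∀ i j, RelP (depEdge N) p i j → x i = x j := by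
  constructor
  · rintro ⟨m, hm, hper⟩ i j ⟨w, ℓ, hw, hpl⟩
    obtain ⟨w', ℓ', hw'⟩ := hsc j i
    have hclosed := hw.concat hw'
    have hpl' : p ∣ ℓ' :=
      (Nat.dvd_add_right hpl).mp (closed_walk_dvd hdiv _ _ _ hclosed)
    have main : ∀ (a b : Fin n) (wab : ℕ → Fin n) (L : ℕ),
        IsWalk (depEdge N) wab L a b → p ∣ L → x b = true → x a = true := by
      intro a b wab L hwab hpL hxb
      obtain ⟨K, hK⟩ := exists_closed_multiples hsc hp hdiv hgcd b
      set t := K + L + 1 with hteq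
      obtain ⟨d, hd⟩ := hpL
      have hdL : d ≤ L := by
        rw [hd]
        exact Nat.le_mul_of_pos_left d hp
      have htm : t ≤ t * m := Nat.le_mul_of_pos_right t hm
      have hs : K ≤ t * m - d := by omega
      obtain ⟨wc, hwc⟩ := hK (t * m - d) hs
      have hcat := hwab.concat hwc
      have hlen : L + (t * m - d) * p = m * (t * p) := by
        have e1 : (t * m - d) * p = t * m * p - d * p := Nat.sub_mul _ _ _
        have e2 : d * p ≤ t * m * p := Nat.mul_le_mul_right p (by omega)
        have e3 : t * m * p = m * (t * p) := by ring
        have e4 : L = d * p := by rw [hd]; ring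
        omega
      rw [hlen] at hcat
      have hfix : (cbn N)^[m * (t * p)] x = x := by
        rw [Function.iterate_mul]
        exact Function.iterate_fixed hper (t * p)
      exact (cbn_iterate_true_iff N (m * (t * p)) x b).mp
        (by rw [hfix]; exact hxb) a _ hcat
    have h1 := main i j w ℓ hw hpl
    have h2 := main j i w' ℓ' hw' hpl'
    cases hxi : x i <;> cases hxj : x j <;> simp_all
  · intro hconst
    refine ⟨p, hp, ?_⟩
    funext i
    cases hxi : x i with
    | true =>
      rw [cbn_iterate_true_iff]
      intro j w hw
      have := hconst j i ⟨w, p, hw, dvd_refl p⟩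
      rw [this, hxi]
    | false =>
      cases h : (cbn N)^[p] x i with
      | false => rfl
      | true =>
        exfalso
        obtain ⟨j, w, hw⟩ := exists_backward_walk N hne i p
        have hxj := (cbn_iterate_true_iff N p x i).mp h j w hw
        have := hconst j i ⟨w, p, hw, dvd_refl p⟩
        rw [hxj, hxi] at this
        exact Bool.noConfusion this
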